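/- arXiv:2203.04290 — 4 statements merged into one kernel-verified Lean document; each statement's English description precedes it below -/
import Mathlib

section
/- With the same recursive composition v_k(x) = v_{k-1}(x) + u_k(x + v_{k-1}(x)) and bounds ‖u_k‖_∞ ≤ a_k, for every pair of points x, y and every index 1 ≤ k'' ≤ K one has ‖v_K(x) − v_K(y)‖_∞ ≤ ‖v_{k''-1}(x) − v_{k''-1}(y)‖_∞ + 2 Σ_{k=k''}^{K} a_k. In particular ‖v_K(x) − v_K(y)‖_∞ ≤ 2 Σ_{k=1}^{K} a_k for all x, y. -/
/-- Upper bound on the difference of accumulated displacements at two points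
(Theorem 1, upper-bound direction): with `v 0 = 0`,
`v (k+1) x = v k x + u (k+1) (x + v k x)` and `‖u k‖_∞ ≤ a k`, for any
`1 ≤ k'' ≤ K`:
`‖v K x − v K y‖ ≤ ‖v (k''−1) x − v (k''−1) y‖ + 2 ∑_{k=k''}^K a k`,
and in particular `‖v K x − v K y‖ ≤ 2 ∑_{k=1}^K a k`. -/
theorem motion_difference_upper_bound (d K : ℕ)
    (u : ℕ → (Fin d → ℝ) → (Fin d → ℝ)) (a : ℕ → ℝ)
    (v : ℕ → (Fin d → ℝ) → (Fin d → ℝ))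
    (hbound : ∀ k ∈ Finset.Icc 1 K, ∀ z : Fin d → ℝ, ‖u k z‖ ≤ a k)
    (hv0 : ∀ x, v 0 x = 0)
    (hvrec : ∀ k x, v (k + 1) x = v k x + u (k + 1) (x + v k x)) :
    (∀ k'' : ℕ, 1 ≤ k'' → k'' ≤ K → ∀ x y : Fin d → ℝ,
        ‖v K x - v K y‖ ≤
          ‖v (k'' - 1) x - v (k'' - 1) y‖ + 2 * ∑ k ∈ Finset.Icc k'' K, a k) ∧
    (∀ x y : Fin d → ℝ, ‖v K x - v K y‖ ≤ 2 * ∑ k ∈ Finset.Icc 1 K, a k) := by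
  have main : ∀ m : ℕ, ∀ n : ℕ, m ≤ n → n ≤ K → ∀ x y : Fin d → ℝ,
      ‖v n x - v n y‖ ≤ ‖v m x - v m y‖ + 2 * ∑ k ∈ Finset.Icc (m + 1) n, a k := by
    intro m n hmn
    induction n, hmn using Nat.le_induction with
    | base =>
      intro _ x y
      simp
    | succ n hmn ih =>
      intro hnK x y
      have hn : n ≤ K := Nat.le_of_succ_le hnK
      have ha : ∀ z, ‖u (n + 1) z‖ ≤ a (n + 1) := by
        intro z
        exact hbound (n + 1) (Finset.mem_Icc.2 ⟨Nat.succ_le_succ (Nat.zero_le _), hnK⟩) z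
      have key : ‖v (n + 1) x - v (n + 1) y‖ ≤ ‖v n x - v n y‖ + 2 * a (n + 1) := by
        rw [hvrec n x, hvrec n y]
        have : v n x + u (n + 1) (x + v n x) - (v n y + u (n + 1) (y + v n y))
            = (v n x - v n y) + (u (n + 1) (x + v n x) - u (n + 1) (y + v n y)) := by
          abel
        rw [this]
        calc ‖(v n x - v n y) + (u (n + 1) (x + v n x) - u (n + 1) (y + v n y))‖
            ≤ ‖v n x - v n y‖ + ‖u (n + 1) (x + v n x) - u (n + 1) (y + v n y)‖ :=
              norm_add_le _ _
          _ ≤ ‖v n x - v n y‖ + (a (n + 1) + a (n + 1)) := by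
              gcongr
              exact (norm_sub_le _ _).trans (add_le_add (ha _) (ha _))
          _ = ‖v n x - v n y‖ + 2 * a (n + 1) := by ring
      have hsum : ∑ k ∈ Finset.Icc (m + 1) (n + 1), a k
          = (∑ k ∈ Finset.Icc (m + 1) n, a k) + a (n + 1) := by
        rw [← Finset.sum_Icc_succ_top (Nat.succ_le_succ hmn)]
      calc ‖v (n + 1) x - v (n + 1) y‖ ≤ ‖v n x - v n y‖ + 2 * a (n + 1) := key
        _ ≤ (‖v m x - v m y‖ + 2 * ∑ k ∈ Finset.Icc (m + 1) n, a k) + 2 * a (n + 1) := by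
            gcongr; exact ih hn x y
        _ = ‖v m x - v m y‖ + 2 * ∑ k ∈ Finset.Icc (m + 1) (n + 1), a k := by
            rw [hsum]; ring
  constructor
  · intro k'' h1 hK x y
    have := main (k'' - 1) K (le_trans (Nat.sub_le _ _) hK) le_rfl x y
    rwa [Nat.sub_add_cancel h1] at this
  · intro x y
    have := main 0 K (Nat.zero_le _) le_rfl x y
    simpa [hv0] using this
end

section
/- Fix integers K ≥ 1, block sizes p_1 > p_2 > … > p_K ≥ 1, and reals a_1, …, a_K ≥ 0. Suppose x, y ∈ ℤ satisfy |x − y| ≥ p_1 + 2 Σ_{k=2}^{K} a_k. Then there exist displacement fields u_1, …, u_K : ℝ → ℝ such that: each u_k restricted to ℤ is p_k-block-constant (u_k(z) depends only on ⌊z/p_k⌋ for the nearest-neighbor extension to ℝ), ‖u_k‖_∞ ≤ a_k, and the recursively composed total displacement v_K (with v_0 = 0, v_k(z) = v_{k-1}(z) + u_k(z + v_{k-1}(z))) satisfies |v_K(x) − v_K(y)| ≥ 2 Σ_{k=1}^{K} a_k. -/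
private lemma rd_floor_lt {A B q : ℝ} (hq : 0 < q) (h : A + q ≤ B) :
    ⌊A / q⌋ < ⌊B / q⌋ := by
  have h1 : (A + q) / q ≤ B / q := by gcongr
  have h2 : (A + q) / q = A / q + 1 := by field_simp
  have h3 : ⌊A / q + 1⌋ ≤ ⌊B / q⌋ := by
    apply Int.floor_le_floor; rw [← h2]; exact h1
  rw [Int.floor_add_one] at h3
  omega

private lemma rd_aux
    (K : ℕ) (hK : 1 ≤ K) (p : ℕ → ℕ) (a : ℕ → ℝ)
    (hp_dec : ∀ k, 1 ≤ k → k < K → p (k + 1) < p k)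
    (hpK : 1 ≤ p K)
    (ha : ∀ k ∈ Finset.Icc 1 K, 0 ≤ a k)
    (x y : ℤ)
    (hxy : (p 1 : ℝ) + 2 * ∑ k ∈ Finset.Icc 2 K, a k ≤ (y : ℝ) - x) :
    ∃ u v : ℕ → ℝ → ℝ,
      (∀ k ∈ Finset.Icc 1 K,
        (∀ z w : ℝ, ⌊z / (p k : ℝ)⌋ = ⌊w / (p k : ℝ)⌋ → u k z = u k w) ∧
        (∀ z : ℝ, |u k z| ≤ a k)) ∧
      (∀ z : ℝ, v 0 z = 0) ∧
      (∀ k z, v (k + 1) z = v k z + u (k + 1) (z + v k z)) ∧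
      2 * ∑ k ∈ Finset.Icc 1 K, a k ≤ |v K (x : ℝ) - v K (y : ℝ)| := by
  -- monotonicity of p on [1,K]
  have hmono0 : ∀ i, 1 ≤ i → ∀ d, i + d ≤ K → p (i + d) ≤ p i := by
    intro i hi d
    induction d with
    | zero => simp
    | succ n ih =>
      intro h
      have hn : p (i + n + 1) < p (i + n) := hp_dec (i + n) (by omega) (by omega)
      have := ih (by omega)
      have : p (i + (n + 1)) = p (i + n + 1) := by ring_nf
      omega
  have hmono : ∀ i j, 1 ≤ i → i ≤ j → j ≤ K → p j ≤ p i := by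
    intro i j hi hij hjK
    have := hmono0 i hi (j - i) (by omega)
    have hj : i + (j - i) = j := by omega
    rwa [hj] at this
  -- nonnegativity of partial sums
  have hS : ∀ k, k ≤ K → 0 ≤ ∑ j ∈ Finset.Icc 1 k, a j := by
    intro k hk
    apply Finset.sum_nonneg
    intro j hj
    simp only [Finset.mem_Icc] at hj
    exact ha j (Finset.mem_Icc.mpr ⟨hj.1, le_trans hj.2 hk⟩)
  have hS2 : 0 ≤ ∑ k ∈ Finset.Icc 2 K, a k := by
    apply Finset.sum_nonneg
    intro j hj
    simp only [Finset.mem_Icc] at hj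
    exact ha j (Finset.mem_Icc.mpr ⟨by omega, hj.2⟩)
  set S : ℕ → ℝ := fun k => ∑ j ∈ Finset.Icc 1 k, a j with hSdef
  set u : ℕ → ℝ → ℝ := fun k z =>
    if ⌊((y : ℝ) + S (k - 1)) / (p k : ℝ)⌋ ≤ ⌊z / (p k : ℝ)⌋ then a k else -a k
    with hudef
  set v : ℕ → ℝ → ℝ := fun k =>
    Nat.rec (fun _ => (0 : ℝ)) (fun k vk z => vk z + u (k + 1) (z + vk z)) k
    with hvdef
  refine ⟨u, v, ?_, fun z => rfl, fun k z => rfl, ?_⟩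
  · intro k hk
    simp only [Finset.mem_Icc] at hk
    constructor
    · intro z w h
      simp only [hudef, h]
    · intro z
      have hak := ha k (Finset.mem_Icc.mpr hk)
      simp only [hudef]
      split <;> simp [abs_of_nonneg hak, hak]
  · -- key induction
    have key : ∀ k, k ≤ K → v k (x : ℝ) = -S k ∧ v k (y : ℝ) = S k := by
      intro k hk
      induction k with
      | zero => simp [hvdef, hSdef]
      | succ n ih =>
        obtain ⟨hx, hy⟩ := ih (by omega)
        have hp1 : (1 : ℕ) ≤ p (n + 1) := le_trans hpK (hmono (n+1) K (by omega) hk le_rfl)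
        have hq : (0 : ℝ) < (p (n+1) : ℝ) := by exact_mod_cast hp1
        have hple : (p (n+1) : ℝ) ≤ (p 1 : ℝ) := by
          exact_mod_cast hmono 1 (n+1) le_rfl (by omega) hk
        have hSn : 0 ≤ S n := hS n (by omega)
        -- distance bound
        have hdist : ((x : ℝ) - S n) + (p (n+1) : ℝ) ≤ (y : ℝ) + S n := by
          have : (p (n+1) : ℝ) ≤ (y : ℝ) - x + 2 * S n := by
            nlinarith
          linarith
        have hfl : ⌊((x : ℝ) - S n) / (p (n+1) : ℝ)⌋
            < ⌊((y : ℝ) + S n) / (p (n+1) : ℝ)⌋ := rd_floor_lt hq hdist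
        have hux : u (n+1) ((x : ℝ) + -S n) = -a (n+1) := by
          have hne : ¬ ⌊((y : ℝ) + S (n + 1 - 1)) / (p (n+1) : ℝ)⌋
              ≤ ⌊((x : ℝ) + -S n) / (p (n+1) : ℝ)⌋ := by
            simp only [Nat.add_sub_cancel]
            push_neg
            have he : (x : ℝ) + -S n = (x : ℝ) - S n := by ring
            rw [he]
            exact hfl
          simp only [hudef]
          rw [if_neg hne]
        have huy : u (n+1) ((y : ℝ) + S n) = a (n+1) := by
          simp only [hudef, Nat.add_sub_cancel]
          rw [if_pos le_rfl]
        have hSstep : S (n+1) = S n + a (n+1) := by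
          simp only [hSdef]
          rw [Finset.sum_Icc_succ_top (by omega : 1 ≤ n + 1)]
        constructor
        · show v n (x : ℝ) + u (n+1) ((x : ℝ) + v n x) = -S (n+1)
          rw [hx, hux, hSstep]; ring
        · show v n (y : ℝ) + u (n+1) ((y : ℝ) + v n y) = S (n+1)
          rw [hy, huy, hSstep]
    obtain ⟨hx, hy⟩ := key K le_rfl
    rw [hx, hy]
    have hSK : 0 ≤ S K := hS K le_rfl
    rw [show -S K - S K = -(2 * S K) by ring, abs_neg, abs_of_nonneg (by linarith)]

/-- Achievability part of the Regional Dependency theorem (1D):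
if `|x − y| ≥ p 1 + 2 ∑_{k=2}^K a k`, there exist residual fields
`u k : ℝ → ℝ`, each `p k`-block-constant (via nearest-neighbor extension,
i.e. depending only on `⌊z / p k⌋`) and bounded by `a k`, whose recursive
composition `v` (`v 0 = 0`, `v (k+1) z = v k z + u (k+1) (z + v k z)`)
satisfies `|v K x − v K y| ≥ 2 ∑_{k=1}^K a k`. -/
theorem regional_dependency_achievability
    (K : ℕ) (hK : 1 ≤ K) (p : ℕ → ℕ) (a : ℕ → ℝ)
    (hp_dec : ∀ k, 1 ≤ k → k < K → p (k + 1) < p k)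
    (hpK : 1 ≤ p K)
    (ha : ∀ k ∈ Finset.Icc 1 K, 0 ≤ a k)
    (x y : ℤ)
    (hxy : (p 1 : ℝ) + 2 * ∑ k ∈ Finset.Icc 2 K, a k ≤ |((x : ℝ) - y)|) :
    ∃ u v : ℕ → ℝ → ℝ,
      (∀ k ∈ Finset.Icc 1 K,
        (∀ z w : ℝ, ⌊z / (p k : ℝ)⌋ = ⌊w / (p k : ℝ)⌋ → u k z = u k w) ∧
        (∀ z : ℝ, |u k z| ≤ a k)) ∧
      (∀ z : ℝ, v 0 z = 0) ∧
      (∀ k z, v (k + 1) z = v k z + u (k + 1) (z + v k z)) ∧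
      2 * ∑ k ∈ Finset.Icc 1 K, a k ≤ |v K (x : ℝ) - v K (y : ℝ)| := by
  rcases abs_cases ((x : ℝ) - y) with ⟨he, _⟩ | ⟨he, _⟩
  · -- x - y ≥ bound : swap roles, x is "y"
    rw [he] at hxy
    obtain ⟨u, v, h1, h2, h3, h4⟩ := rd_aux K hK p a hp_dec hpK ha y x (by linarith)
    exact ⟨u, v, h1, h2, h3, by rwa [abs_sub_comm] at h4⟩
  · rw [he] at hxy
    exact rd_aux K hK p a hp_dec hpK ha x y (by linarith)
end

section
/- Let a_1, …, a_K ≥ 0 and let (p_k) and (p'_k) be two decreasing sequences of positive integers with p'_k ≤ p_k for every k. Let Δ and Δ' be the corresponding motion-separability functions (defined piecewise as in Eq. (9)). Then for every p at which both are defined, Δ'(p) ≥ Δ(p). -/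
/-- `DeltaSpec K p a P v` states that `v` is the value assigned to the
distance `P` by the piecewise motion-separability function Δ of Eq. (9),
with pool sizes `p k` and capture ranges `a k`. -/
def DeltaSpec (K : ℕ) (p : ℕ → ℕ) (a : ℕ → ℝ) (P v : ℝ) : Prop :=
  ((p 1 : ℝ) + 2 * ∑ k ∈ Finset.Icc 2 K, a k ≤ P ∧
      v = 2 * ∑ k ∈ Finset.Icc 1 K, a k) ∨
  (∃ k : ℕ, 1 < k ∧ k ≤ K ∧
      (p k : ℝ) + 2 * ∑ k' ∈ Finset.Icc (k + 1) K, a k' ≤ P ∧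
      P < (p (k - 1) : ℝ) + 2 * ∑ k' ∈ Finset.Icc k K, a k' ∧
      v = 2 * ∑ k' ∈ Finset.Icc k K, a k') ∨
  (P < (p K : ℝ) ∧ v = 0)

lemma pool_mono (K : ℕ) (p : ℕ → ℕ)
    (hdec : ∀ k, 1 ≤ k → k < K → p (k + 1) < p k) :
    ∀ i j, 1 ≤ i → i ≤ j → j ≤ K → p j ≤ p i := by
  intro i j hi hij hjK
  induction j with
  | zero => omega
  | succ n ih =>
    rcases Nat.eq_or_lt_of_le hij with h | h
    · rw [h]
    · have h1 : p n ≤ p i := ih (by omega) (by omega)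
      have h2 : p (n + 1) < p n := hdec n (by omega) (by omega)
      omega

lemma tail_sum_mono (K : ℕ) (a : ℕ → ℝ)
    (ha : ∀ k ∈ Finset.Icc 1 K, 0 ≤ a k) (j k : ℕ) (hj : 1 ≤ j) (hjk : j ≤ k) :
    ∑ k' ∈ Finset.Icc k K, a k' ≤ ∑ k' ∈ Finset.Icc j K, a k' := by
  apply Finset.sum_le_sum_of_subset_of_nonneg
  · exact Finset.Icc_subset_Icc_left hjk
  · intro i hi _
    exact ha i (Finset.mem_Icc.mpr ⟨le_trans hj (Finset.mem_Icc.mp hi).1,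
      (Finset.mem_Icc.mp hi).2⟩)

lemma tail_sum_nonneg (K : ℕ) (a : ℕ → ℝ)
    (ha : ∀ k ∈ Finset.Icc 1 K, 0 ≤ a k) (k : ℕ) (hk : 1 ≤ k) :
    0 ≤ ∑ k' ∈ Finset.Icc k K, a k' :=
  Finset.sum_nonneg fun i hi => ha i (Finset.mem_Icc.mpr
    ⟨le_trans hk (Finset.mem_Icc.mp hi).1, (Finset.mem_Icc.mp hi).2⟩)

/-- Reducing the pool sizes pointwise (`p' k ≤ p k`) while keeping the
capture ranges `a k` fixed pointwise increases the motion-separability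
function: `Δ'(P) ≥ Δ(P)` wherever both are defined. -/
theorem delta_increases_with_smaller_pools (K : ℕ) (hK : 1 ≤ K)
    (p p' : ℕ → ℕ) (a : ℕ → ℝ)
    (hp_dec : ∀ k, 1 ≤ k → k < K → p (k + 1) < p k)
    (hp'_dec : ∀ k, 1 ≤ k → k < K → p' (k + 1) < p' k)
    (hpK : 1 ≤ p K) (hp'K : 1 ≤ p' K)
    (hle : ∀ k ∈ Finset.Icc 1 K, p' k ≤ p k)
    (ha : ∀ k ∈ Finset.Icc 1 K, 0 ≤ a k)
    (P v v' : ℝ)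
    (hv : DeltaSpec K p a P v) (hv' : DeltaSpec K p' a P v') :
    v ≤ v' := by
  have hsnn := tail_sum_nonneg K a ha
  have hsm := tail_sum_mono K a ha
  rcases hv' with ⟨_, hv'eq⟩ | ⟨j, hj1, hjK, hjlo, hjhi, hv'eq⟩ | ⟨h'bot, hv'eq⟩
  · -- v' is the full sum: v ≤ full sum
    rcases hv with ⟨_, hveq⟩ | ⟨k, hk1, hkK, _, _, hveq⟩ | ⟨_, hveq⟩
    · rw [hveq, hv'eq]
    · rw [hveq, hv'eq]
      linarith [hsm 1 k le_rfl (by omega)]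
    · rw [hveq, hv'eq]
      linarith [hsnn 1 le_rfl]
  · -- v' is a middle level j
    rcases hv with ⟨hvlo, hveq⟩ | ⟨k, hk1, hkK, hvlo, hvhi, hveq⟩ | ⟨hvbot, hveq⟩
    · -- v at top level: contradiction with P < p'(j-1) + 2∑_{j..K}
      exfalso
      have hpj : p' (j - 1) ≤ p 1 := le_trans
        (hle (j - 1) (Finset.mem_Icc.mpr ⟨by omega, by omega⟩))
        (pool_mono K p hp_dec 1 (j - 1) le_rfl (by omega) (by omega))
      have hs : ∑ k' ∈ Finset.Icc j K, a k' ≤ ∑ k ∈ Finset.Icc 2 K, a k :=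
        hsm 2 j (by omega) (by omega)
      have : (p' (j - 1) : ℝ) ≤ (p 1 : ℝ) := by exact_mod_cast hpj
      linarith
    · -- both middle: show j ≤ k
      by_cases hjk : j ≤ k
      · rw [hveq, hv'eq]
        linarith [hsm j k (by omega) hjk]
      · exfalso
        push_neg at hjk
        have hkj1 : k ≤ j - 1 := by omega
        have hpj : p' (j - 1) ≤ p k := le_trans
          (hle (j - 1) (Finset.mem_Icc.mpr ⟨by omega, by omega⟩))
          (pool_mono K p hp_dec k (j - 1) (by omega) hkj1 (by omega))
        have hs : ∑ k' ∈ Finset.Icc j K, a k' ≤ ∑ k' ∈ Finset.Icc (k + 1) K, a k' :=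
          hsm (k + 1) j (by omega) (by omega)
        have : (p' (j - 1) : ℝ) ≤ (p k : ℝ) := by exact_mod_cast hpj
        linarith
    · -- v = 0 ≤ v'
      rw [hveq, hv'eq]
      linarith [hsnn j (by omega)]
  · -- v' bottom: show v must also be 0 (or contradiction)
    rcases hv with ⟨hvlo, hveq⟩ | ⟨k, hk1, hkK, hvlo, hvhi, hveq⟩ | ⟨hvbot, hveq⟩
    · exfalso
      have hpK1 : p' K ≤ p 1 := le_trans
        (hle K (Finset.mem_Icc.mpr ⟨hK, le_rfl⟩))
        (pool_mono K p hp_dec 1 K le_rfl hK le_rfl)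
      have : (p' K : ℝ) ≤ (p 1 : ℝ) := by exact_mod_cast hpK1
      linarith [hsnn 2 (by omega)]
    · exfalso
      have hpKk : p' K ≤ p k := le_trans
        (hle K (Finset.mem_Icc.mpr ⟨hK, le_rfl⟩))
        (pool_mono K p hp_dec k K (by omega) hkK le_rfl)
      have : (p' K : ℝ) ≤ (p k : ℝ) := by exact_mod_cast hpKk
      linarith [hsnn (k + 1) (by omega)]
    · rw [hveq, hv'eq]
end

section
/- Let a_1, …, a_K ≥ 0 and p_1 > … > p_K ≥ 1 be as in the coarse-to-fine setting, and fix 1 ≤ k'' ≤ K. Suppose u_{k''}, …, u_K : ℝ → ℝ satisfy ‖u_k‖_∞ ≤ a_k, and define v by v_{k''−1} = 0 and v_k(z) = v_{k−1}(z) + u_k(z + v_{k−1}(z)). Then for all x, y ∈ ℤ, |v_K(x) − v_K(y)| ≤ 2 Σ_{k=k''}^{K} a_k, and this bound is tight: there exist admissible fields (each u_k being p_k-block-constant) and points x, y with |x − y| ≥ p_{k''} + 2Σ_{k=k''+1}^K a_k achieving |v_K(x) − v_K(y)| = 2 Σ_{k=k''}^{K} a_k. -/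
/-- Regional Dependency theorem restricted to levels `k''` through `K`:
(upper bound) any composition of residual fields `u k` bounded by `a k`
starting from the identity at level `k''−1` satisfies
`|v K x − v K y| ≤ 2 ∑_{k=k''}^K a k` for all points; and (tightness) there
exist admissible fields — each `u k` being `p k`-block-constant on the
nearest-neighbor extension — and points `x, y` with
`|x − y| ≥ p k'' + 2 ∑_{k=k''+1}^K a k` achieving
`|v K x − v K y| = 2 ∑_{k=k''}^K a k`. -/
theorem regional_dependency_partial (K k'' : ℕ) (hk1 : 1 ≤ k'') (hkK : k'' ≤ K)
    (p : ℕ → ℕ) (a : ℕ → ℝ)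
    (hp_dec : ∀ k, 1 ≤ k → k < K → p (k + 1) < p k)
    (hpK : 1 ≤ p K)
    (ha : ∀ k ∈ Finset.Icc 1 K, 0 ≤ a k) :
    (∀ u v : ℕ → ℝ → ℝ,
      (∀ k ∈ Finset.Icc k'' K, ∀ z : ℝ, |u k z| ≤ a k) →
      (∀ z : ℝ, v (k'' - 1) z = 0) →
      (∀ k, k'' - 1 ≤ k → k < K →
        ∀ z : ℝ, v (k + 1) z = v k z + u (k + 1) (z + v k z)) →
      ∀ x y : ℤ,
        |v K (x : ℝ) - v K (y : ℝ)| ≤ 2 * ∑ k ∈ Finset.Icc k'' K, a k) ∧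
    (∃ u v : ℕ → ℝ → ℝ, ∃ x y : ℤ,
      (∀ k ∈ Finset.Icc k'' K,
        (∀ z w : ℝ, ⌊z / (p k : ℝ)⌋ = ⌊w / (p k : ℝ)⌋ → u k z = u k w) ∧
        (∀ z : ℝ, |u k z| ≤ a k)) ∧
      (∀ z : ℝ, v (k'' - 1) z = 0) ∧
      (∀ k, k'' - 1 ≤ k → k < K →
        ∀ z : ℝ, v (k + 1) z = v k z + u (k + 1) (z + v k z)) ∧
      (p k'' : ℝ) + 2 * ∑ k ∈ Finset.Icc (k'' + 1) K, a k ≤ |((x : ℝ) - y)| ∧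
      |v K (x : ℝ) - v K (y : ℝ)| = 2 * ∑ k ∈ Finset.Icc k'' K, a k) := by
  have haS : ∀ k, k ≤ K → (0:ℝ) ≤ ∑ j ∈ Finset.Icc k'' k, a j := by
    intro k hk
    refine Finset.sum_nonneg fun j hj => ?_
    rw [Finset.mem_Icc] at hj
    exact ha j (Finset.mem_Icc.2 ⟨le_trans hk1 hj.1, le_trans hj.2 hk⟩)
  constructor
  · intro u v hu hv0 hrec x y
    have key : ∀ n, k'' - 1 ≤ n → n ≤ K → ∀ z : ℝ,
        |v n z| ≤ ∑ j ∈ Finset.Icc k'' n, a j := by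
      intro n hn
      induction n, hn using Nat.le_induction with
      | base =>
        intro _ z
        rw [hv0 z, Finset.Icc_eq_empty (by omega)]
        simp
      | succ n hn ih =>
        intro hnK z
        have hnK' : n < K := by omega
        rw [hrec n hn hnK' z]
        have h1 := ih (le_of_lt hnK') z
        have h2 := hu (n+1) (Finset.mem_Icc.2 ⟨by omega, hnK⟩) (z + v n z)
        calc |v n z + u (n+1) (z + v n z)| ≤ |v n z| + |u (n+1) (z + v n z)| :=
              abs_add_le _ _
          _ ≤ (∑ j ∈ Finset.Icc k'' n, a j) + a (n+1) := add_le_add h1 h2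
          _ = ∑ j ∈ Finset.Icc k'' (n+1), a j :=
              (Finset.sum_Icc_succ_top (by omega) a).symm
    have hx := key K (by omega) le_rfl (x : ℝ)
    have hy := key K (by omega) le_rfl (y : ℝ)
    calc |v K (x:ℝ) - v K (y:ℝ)| ≤ |v K (x:ℝ)| + |v K (y:ℝ)| := abs_sub _ _
      _ ≤ 2 * ∑ k ∈ Finset.Icc k'' K, a k := by linarith
  · have hppos : ∀ m, k'' ≤ m → m ≤ K → 0 < p m := by
      intro m hm hmK
      have : ∀ n, m ≤ n → n ≤ K → p n ≤ p m := by
        intro n hn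
        induction n, hn using Nat.le_induction with
        | base => intro _; exact le_rfl
        | succ n hn ih =>
          intro hnK
          have := hp_dec n (by omega) (by omega)
          have := ih (by omega)
          omega
      have := this K hmK le_rfl
      omega
    set S' : ℝ := ∑ k ∈ Finset.Icc (k'' + 1) K, a k with hS'
    refine ⟨fun k z => if (⌊z / (p k : ℝ)⌋ : ℤ) < 0 then -a k else a k,
      fun k z => if z < 0 then -(∑ j ∈ Finset.Icc k'' k, a j)
        else ∑ j ∈ Finset.Icc k'' k, a j,
      0, -((p k'' : ℤ) + (⌈2 * S'⌉₊ : ℤ) + 1), ?_, ?_, ?_, ?_, ?_⟩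
    · intro k hk
      rw [Finset.mem_Icc] at hk
      refine ⟨fun z w h => by beta_reduce; rw [h], fun z => ?_⟩
      beta_reduce
      have hak : 0 ≤ a k := ha k (Finset.mem_Icc.2 ⟨le_trans hk1 hk.1, hk.2⟩)
      split <;> simp [abs_of_nonneg, abs_of_nonpos, hak]
    · intro z
      beta_reduce
      rw [Finset.Icc_eq_empty (by omega : ¬ k'' ≤ k'' - 1)]
      simp
    · intro k hk hkK z
      beta_reduce
      have hS : (0:ℝ) ≤ ∑ j ∈ Finset.Icc k'' k, a j := haS k (by omega)
      have hak : 0 ≤ a (k+1) := ha (k+1) (Finset.mem_Icc.2 ⟨by omega, by omega⟩)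
      have hp1 : (0:ℝ) < (p (k+1) : ℝ) := by
        exact_mod_cast hppos (k+1) (by omega) (by omega)
      have hsum : ∑ j ∈ Finset.Icc k'' (k+1), a j
          = (∑ j ∈ Finset.Icc k'' k, a j) + a (k+1) :=
        Finset.sum_Icc_succ_top (by omega) a
      by_cases hz : z < 0
      · have h1 : z + -(∑ j ∈ Finset.Icc k'' k, a j) < 0 := by linarith
        have h2 : (z + -(∑ j ∈ Finset.Icc k'' k, a j)) / (p (k+1) : ℝ) < 0 :=
          div_neg_of_neg_of_pos h1 hp1
        have h3 : ⌊(z + -(∑ j ∈ Finset.Icc k'' k, a j)) / (p (k+1) : ℝ)⌋ < 0 := by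
          by_contra hc
          push_neg at hc
          exact absurd (Int.floor_nonneg.1 hc) (not_le.2 h2)
        simp only [if_pos hz, if_pos h3, hsum]
        ring
      · push_neg at hz
        have h1 : 0 ≤ z + ∑ j ∈ Finset.Icc k'' k, a j := by linarith
        have h2 : 0 ≤ (z + ∑ j ∈ Finset.Icc k'' k, a j) / (p (k+1) : ℝ) :=
          div_nonneg h1 hp1.le
        have h3 : ¬ ⌊(z + ∑ j ∈ Finset.Icc k'' k, a j) / (p (k+1) : ℝ)⌋ < 0 := by
          simpa [not_lt] using Int.floor_nonneg.2 h2
        simp only [if_neg (not_lt.2 hz), if_neg h3, hsum]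
    · have hN : 2 * S' ≤ (⌈2 * S'⌉₊ : ℝ) := Nat.le_ceil _
      push_cast
      rw [zero_sub, neg_neg, abs_of_nonneg (by positivity)]
      linarith
    · have hS : (0:ℝ) ≤ ∑ j ∈ Finset.Icc k'' K, a j := haS K le_rfl
      have hx0 : ¬ ((0:ℤ) : ℝ) < 0 := by norm_num
      have hy0 : ((-((p k'' : ℤ) + (⌈2 * S'⌉₊ : ℤ) + 1) : ℤ) : ℝ) < 0 := by
        push_cast
        have h1 : (0:ℝ) ≤ (p k'' : ℝ) := Nat.cast_nonneg _
        have h2 : (0:ℝ) ≤ (⌈2 * S'⌉₊ : ℝ) := Nat.cast_nonneg _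
        linarith
      beta_reduce
      rw [if_neg hx0, if_pos hy0]
      rw [sub_neg_eq_add, abs_of_nonneg (by linarith)]
      ring
end
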